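/- (Poincaré inequality with k-independent constant) Let g be a positive function on [R*, +∞) that is Lipschitz with constant L > 0, let R_{k+1} = R_k + g(R_k)/(2L) with R_0 ≥ R*, and set ω_k = {(x1, x2) : R_k < x1 < R_{k+1}, |x2| < g(x1)}. There exists a constant c, independent of k, g, L and u, such that for every continuously differentiable function u on the closure of ω_k satisfying u(x1, g(x1)) = u(x1, −g(x1)) = 0 for all x1 ∈ [R_k, R_{k+1}]: ∫_{ω_k} |u(x)|² dx ≤ c·g(R_k)²·∫_{ω_k} |∇u(x)|² dx. -/

import Mathlib

open MeasureTheory Set Topology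
open scoped ENNReal


/-- The slice `ω = {(x₁,x₂) : a < x₁ < b, |x₂| < g(x₁)}` of the outlet. -/
def outletSlice (g : ℝ → ℝ) (a b : ℝ) : Set (ℝ × ℝ) :=
  {x : ℝ × ℝ | a < x.1 ∧ x.1 < b ∧ |x.2| < g x.1}


lemma cs_aux (μ : Measure ℝ) (hfin : μ Set.univ ≠ ⊤) {φ : ℝ → ℝ}
    (hmeas : AEMeasurable φ μ) (hint2 : Integrable (fun y => φ y ^ 2) μ) :
    (∫ y, |φ y| ∂μ) ^ 2 ≤ (μ Set.univ).toReal * ∫ y, φ y ^ 2 ∂μ := by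
  have habs : AEMeasurable (fun y => |φ y|) μ := continuous_abs.measurable.comp_aemeasurable hmeas
  have hnn : 0 ≤ᵐ[μ] fun y => |φ y| := Filter.Eventually.of_forall fun y => abs_nonneg _
  have hnn2 : 0 ≤ᵐ[μ] fun y => φ y ^ 2 := Filter.Eventually.of_forall fun y => sq_nonneg _
  have h1 : ∫ y, |φ y| ∂μ = (∫⁻ y, ENNReal.ofReal (|φ y|) ∂μ).toReal :=
    integral_eq_lintegral_of_nonneg_ae hnn habs.aestronglyMeasurable
  have h2 : ∫ y, φ y ^ 2 ∂μ = (∫⁻ y, ENNReal.ofReal (φ y ^ 2) ∂μ).toReal :=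
    integral_eq_lintegral_of_nonneg_ae hnn2 ((hmeas.pow_const 2).aestronglyMeasurable)
  set A := ∫⁻ y, ENNReal.ofReal (φ y ^ 2) ∂μ with hA
  have hAne : A ≠ ⊤ := by
    have h := hint2.hasFiniteIntegral
    rw [hasFiniteIntegral_iff_norm] at h
    have he : A = ∫⁻ y, ENNReal.ofReal ‖φ y ^ 2‖ ∂μ := by
      rw [hA]; congr 1; funext y; rw [Real.norm_eq_abs, abs_of_nonneg (sq_nonneg _)]
    rw [he]; exact ne_of_lt h
  have hconj : Real.HolderConjugate 2 2 := ⟨by norm_num, by norm_num, by norm_num⟩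
  have holder := ENNReal.lintegral_mul_le_Lp_mul_Lq μ hconj
      habs.ennreal_ofReal (aemeasurable_const : AEMeasurable (fun _ => (1:ℝ≥0∞)) μ)
  simp only [Pi.mul_apply, mul_one, ENNReal.one_rpow, lintegral_const, one_mul] at holder
  have hpow : ∀ y, (ENNReal.ofReal |φ y|) ^ (2:ℝ) = ENNReal.ofReal (φ y ^ 2) := by
    intro y
    rw [show ((2:ℝ)) = ((2:ℕ):ℝ) by norm_num, ENNReal.rpow_natCast,
      ← ENNReal.ofReal_pow (abs_nonneg _), sq_abs]
  simp only [hpow] at holder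
  have hRne : A ^ ((1:ℝ)/2) * (μ Set.univ) ^ ((1:ℝ)/2) ≠ ⊤ := by
    apply ENNReal.mul_ne_top
    · exact ENNReal.rpow_ne_top_of_nonneg (by norm_num) hAne
    · exact ENNReal.rpow_ne_top_of_nonneg (by norm_num) hfin
  have hmono := ENNReal.toReal_mono hRne holder
  rw [← h1] at hmono
  have hsq : (∫ y, |φ y| ∂μ) ^ 2 ≤ ((A ^ ((1:ℝ)/2) * (μ Set.univ) ^ ((1:ℝ)/2)).toReal) ^ 2 :=
    pow_le_pow_left₀ (integral_nonneg fun y => abs_nonneg _) hmono 2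
  calc (∫ y, |φ y| ∂μ) ^ 2 ≤ ((A ^ ((1:ℝ)/2) * (μ Set.univ) ^ ((1:ℝ)/2)).toReal) ^ 2 := hsq
    _ = (μ Set.univ).toReal * A.toReal := by
        rw [ENNReal.toReal_mul, mul_pow, ← ENNReal.toReal_rpow, ← ENNReal.toReal_rpow]
        rw [← Real.rpow_natCast (A.toReal ^ ((1:ℝ)/2)) 2,
          ← Real.rpow_natCast ((μ Set.univ).toReal ^ ((1:ℝ)/2)) 2]
        rw [← Real.rpow_mul ENNReal.toReal_nonneg, ← Real.rpow_mul ENNReal.toReal_nonneg]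
        norm_num [mul_comm]
    _ = (μ Set.univ).toReal * ∫ y, φ y ^ 2 ∂μ := by rw [h2]

lemma poincare_1d {c1 c2 M : ℝ} {f f' : ℝ → ℝ} (hle : c1 ≤ c2)
    (hcont : ContinuousOn f (Icc c1 c2))
    (hderiv : ∀ y ∈ Ioo c1 c2, HasDerivAt f (f' y) y)
    (hmeas : Measurable f')
    (hbound : ∀ y, |f' y| ≤ M)
    (hzero : f c1 = 0) :
    ∫ y in Ioo c1 c2, f y ^ 2 ≤ (c2 - c1) ^ 2 * ∫ y in Ioo c1 c2, f' y ^ 2 := by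
  have hconstM : IntegrableOn (fun _ => M) (Ioc c1 c2) volume :=
    integrableOn_const measure_Ioc_lt_top.ne
  have hconstM2 : IntegrableOn (fun _ => M ^ 2) (Ioc c1 c2) volume :=
    integrableOn_const measure_Ioc_lt_top.ne
  have hf'_int : IntegrableOn f' (Ioc c1 c2) volume :=
    hconstM.mono' hmeas.aestronglyMeasurable
      (ae_of_all _ fun t => by rw [Real.norm_eq_abs]; exact hbound t)
  have habs_int : IntegrableOn (fun t => |f' t|) (Ioc c1 c2) volume := hf'_int.abs
  have hsq_int : IntegrableOn (fun t => f' t ^ 2) (Ioc c1 c2) volume := by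
    refine hconstM2.mono' ((hmeas.pow_const 2).aestronglyMeasurable) (ae_of_all _ fun t => ?_)
    rw [Real.norm_eq_abs, abs_of_nonneg (sq_nonneg _), ← sq_abs]
    exact pow_le_pow_left₀ (abs_nonneg _) (hbound t) 2
  have hII : ∀ y ∈ Icc c1 c2, IntervalIntegrable f' volume c1 y := fun y hy => by
    rw [intervalIntegrable_iff_integrableOn_Ioc_of_le hy.1]
    exact hf'_int.mono_set (Ioc_subset_Ioc le_rfl hy.2)
  have hftc : ∀ y ∈ Icc c1 c2, f y = ∫ t in c1..y, f' t := by
    intro y hy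
    have := intervalIntegral.integral_eq_sub_of_hasDeriv_right_of_le hy.1
      (hcont.mono (Icc_subset_Icc le_rfl hy.2))
      (fun t ht => (hderiv t ⟨ht.1, lt_of_lt_of_le ht.2 hy.2⟩).hasDerivWithinAt)
      (hII y hy)
    rw [this, hzero, sub_zero]
  set A := ∫ t in Ioc c1 c2, |f' t| with hA
  set B := ∫ t in Ioc c1 c2, f' t ^ 2 with hB
  have hfA : ∀ y ∈ Icc c1 c2, |f y| ≤ A := by
    intro y hy
    rw [hftc y hy]
    calc |∫ t in c1..y, f' t| ≤ ∫ t in c1..y, |f' t| :=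
          intervalIntegral.abs_integral_le_integral_abs hy.1
      _ = ∫ t in Ioc c1 y, |f' t| := intervalIntegral.integral_of_le hy.1
      _ ≤ A := by
          apply setIntegral_mono_set habs_int
            (ae_of_all _ fun t => abs_nonneg _)
            (HasSubset.Subset.eventuallyLE (Ioc_subset_Ioc le_rfl hy.2))
  have hCS : A ^ 2 ≤ (c2 - c1) * B := by
    have := cs_aux (volume.restrict (Ioc c1 c2))
      (by rw [Measure.restrict_apply_univ]; exact measure_Ioc_lt_top.ne)
      hmeas.aemeasurable hsq_int
    rwa [Measure.restrict_apply_univ, Real.volume_Ioc, ENNReal.toReal_ofReal (by linarith)] at this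
  have hfB : ∀ y ∈ Icc c1 c2, f y ^ 2 ≤ (c2 - c1) * B := by
    intro y hy
    calc f y ^ 2 = |f y| ^ 2 := (sq_abs _).symm
      _ ≤ A ^ 2 := pow_le_pow_left₀ (abs_nonneg _) (hfA y hy) 2
      _ ≤ (c2 - c1) * B := hCS
  have hf2_int : IntegrableOn (fun y => f y ^ 2) (Ioo c1 c2) volume :=
    ((hcont.pow 2).integrableOn_Icc).mono_set Ioo_subset_Icc_self
  have step : ∫ y in Ioo c1 c2, f y ^ 2 ≤ ∫ _y in Ioo c1 c2, (c2 - c1) * B :=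
    setIntegral_mono_on hf2_int (integrableOn_const measure_Ioo_lt_top.ne)
      measurableSet_Ioo (fun y hy => hfB y (Ioo_subset_Icc_self hy))
  rw [setIntegral_const, Real.volume_real_Ioo_of_le hle, smul_eq_mul] at step
  have hBoo : B = ∫ y in Ioo c1 c2, f' y ^ 2 := integral_Ioc_eq_integral_Ioo
  calc ∫ y in Ioo c1 c2, f y ^ 2 ≤ (c2 - c1) * ((c2 - c1) * B) := step
    _ = (c2 - c1) ^ 2 * ∫ y in Ioo c1 c2, f' y ^ 2 := by rw [← hBoo]; ring

lemma exists_fderiv_bound {u : ℝ × ℝ → ℝ} {Ω : Set (ℝ × ℝ)} (hΩ : IsOpen Ω)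
    (hK : IsCompact (closure Ω)) (hu : ContDiffOn ℝ 1 u (closure Ω)) :
    ∃ M : ℝ, 0 ≤ M ∧ ∀ x ∈ Ω, ‖fderiv ℝ u x‖ ≤ M := by
  set S := closure Ω with hS
  have key : ∀ x ∈ S, ∃ o : Set (ℝ × ℝ), IsOpen o ∧ x ∈ o ∧
      ∃ C : ℝ, ∀ y ∈ Ω ∩ o, ‖fderiv ℝ u y‖ ≤ C := by
    intro x hx
    have hx1 : ContDiffWithinAt ℝ (0 + 1) u S x := by
      have := hu x hx; rwa [show ((0:WithTop ℕ∞) + 1) = 1 by norm_num]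
    rcases (contDiffWithinAt_succ_iff_hasFDerivWithinAt' (by simp)).1 hx1 with
      ⟨v, hv, hvS, -, f', hvf', hf'⟩
    rw [insert_eq_self.2 hx] at hv hvS
    have hcw : ContinuousWithinAt f' S x := hf'.continuousWithinAt
    have hW : f' ⁻¹' Metric.ball (f' x) 1 ∈ 𝓝[S] x := hcw (Metric.ball_mem_nhds _ one_pos)
    have hvW : v ∩ f' ⁻¹' Metric.ball (f' x) 1 ∈ 𝓝[S] x := Filter.inter_mem hv hW
    rcases mem_nhdsWithin.1 hvW with ⟨o, ho, hxo, hoS⟩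
    refine ⟨o, ho, hxo, ‖f' x‖ + 1, fun y hy => ?_⟩
    have hyS : y ∈ S := subset_closure hy.1
    have hymem : y ∈ v ∩ f' ⁻¹' Metric.ball (f' x) 1 := hoS ⟨hy.2, hyS⟩
    have hfd : HasFDerivAt u (f' y) y := by
      refine ((hvf' y hymem.1).mono ?_).hasFDerivAt ((hΩ.inter ho).mem_nhds ⟨hy.1, hy.2⟩)
      exact fun z hz => subset_closure hz.1
    rw [hfd.fderiv]
    have hd : dist (f' y) (f' x) < 1 := hymem.2
    have hns := norm_sub_norm_le (f' y) (f' x)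
    rw [← dist_eq_norm] at hns
    linarith
  choose! o ho hxo C hC using key
  rcases hK.elim_nhds_subcover o (fun x hx => (ho x hx).mem_nhds (hxo x hx)) with ⟨t, htS, hcov⟩
  rcases (t.image C).exists_le with ⟨M₀, hM₀⟩
  refine ⟨max M₀ 0, le_max_right _ _, fun y hy => ?_⟩
  have hyS : y ∈ S := subset_closure hy
  rcases mem_iUnion₂.1 (hcov hyS) with ⟨x, hxt, hyo⟩
  exact le_trans (hC x (htS x hxt) y ⟨hy, hyo⟩)
    (le_trans (hM₀ (C x) (Finset.mem_image_of_mem C hxt)) (le_max_left _ _))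

lemma slice_lintegral {g : ℝ → ℝ} {a b : ℝ} (Φ : ℝ × ℝ → ℝ≥0∞)
    (hω : MeasurableSet (outletSlice g a b))
    (hmeas : AEMeasurable ((outletSlice g a b).indicator Φ) volume) :
    ∫⁻ x in outletSlice g a b, Φ x =
      ∫⁻ x1, (Ioo a b).indicator (fun t => ∫⁻ y in Ioo (-(g t)) (g t), Φ (t, y)) x1 := by
  rw [← lintegral_indicator hω]
  rw [show (volume : Measure (ℝ × ℝ)) = (volume : Measure ℝ).prod volume from
    Measure.volume_eq_prod ℝ ℝ]
  rw [show (volume : Measure (ℝ × ℝ)) = (volume : Measure ℝ).prod volume from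
    Measure.volume_eq_prod ℝ ℝ] at hmeas
  rw [lintegral_prod _ hmeas]
  congr 1
  funext x1
  by_cases hx1 : x1 ∈ Ioo a b
  · rw [indicator_of_mem hx1]
    have heq : (fun y => (outletSlice g a b).indicator Φ (x1, y)) =
        (Ioo (-(g x1)) (g x1)).indicator (fun y => Φ (x1, y)) := by
      funext y
      by_cases hy : y ∈ Ioo (-(g x1)) (g x1)
      · rw [indicator_of_mem hy, indicator_of_mem]
        exact ⟨hx1.1, hx1.2, abs_lt.2 ⟨hy.1, hy.2⟩⟩
      · rw [indicator_of_notMem hy, indicator_of_notMem]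
        intro hmem
        exact hy ⟨(abs_lt.1 hmem.2.2).1, (abs_lt.1 hmem.2.2).2⟩
    rw [heq, lintegral_indicator measurableSet_Ioo]
  · rw [indicator_of_notMem hx1]
    have heq : (fun y => (outletSlice g a b).indicator Φ (x1, y)) = fun _ => 0 := by
      funext y
      exact indicator_of_notMem (fun hmem => hx1 ⟨hmem.1, hmem.2.1⟩) _
    rw [heq, lintegral_const, zero_mul]

/-- Lemma 5.2 (Poincaré inequality with `k`-independent constant): there is a universal
constant `c` such that for every positive `L`-Lipschitz `g`, the sequence
`R_{k+1} = R_k + g(R_k)/(2L)` and every `C¹` function `u` on the closure of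
`ω_k = {R_k < x₁ < R_{k+1}, |x₂| < g(x₁)}` vanishing on the lateral boundaries
`x₂ = ±g(x₁)`, one has `∫_{ω_k} u² ≤ c·g(R_k)²·∫_{ω_k} |∇u|²`. -/
theorem poincare_uniform_constant :
    ∃ c : ℝ, 0 < c ∧
      ∀ (Rstar L : ℝ) (g : ℝ → ℝ) (R : ℕ → ℝ) (k : ℕ) (u : ℝ × ℝ → ℝ),
        0 < L →
        (∀ t, Rstar ≤ t → 0 < g t) →
        (∀ t1 t2, Rstar ≤ t1 → Rstar ≤ t2 → |g t1 - g t2| ≤ L * |t1 - t2|) →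
        Rstar ≤ R 0 →
        (∀ j, R (j + 1) = R j + g (R j) / (2 * L)) →
        ContDiffOn ℝ 1 u (closure (outletSlice g (R k) (R (k + 1)))) →
        (∀ x1 ∈ Set.Icc (R k) (R (k + 1)), u (x1, g x1) = 0 ∧ u (x1, -(g x1)) = 0) →
        ∫ x in outletSlice g (R k) (R (k + 1)), (u x) ^ 2 ≤
          c * (g (R k)) ^ 2 *
            ∫ x in outletSlice g (R k) (R (k + 1)),
              ‖fderivWithin ℝ u (closure (outletSlice g (R k) (R (k + 1)))) x‖ ^ 2 := by
  refine ⟨9, by norm_num, ?_⟩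
  intro Rstar L g R k u hL hgpos hlip hR0 hRrec hu hbc
  set a := R k with ha_def
  set b := R (k + 1) with hb_def
  set ω := outletSlice g a b with hω_def
  set S := closure ω with hS_def
  have hRge : ∀ j, Rstar ≤ R j := by
    intro j
    induction j with
    | zero => exact hR0
    | succ n ih =>
        have h1 : 0 < g (R n) := hgpos _ ih
        have h2 : 0 ≤ g (R n) / (2 * L) := div_nonneg h1.le (by linarith)
        rw [hRrec n]; linarith
  have ha : Rstar ≤ a := hRge k
  have hga : 0 < g a := hgpos a ha
  have hb : b = a + g a / (2 * L) := hRrec k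
  have hab : a < b := by
    have : 0 < g a / (2 * L) := div_pos hga (by linarith)
    rw [hb]; linarith
  have hgb : ∀ t ∈ Icc a b, g a / 2 ≤ g t ∧ g t ≤ 3 / 2 * g a := by
    intro t ht
    have htR : Rstar ≤ t := le_trans ha ht.1
    have h1 : |g t - g a| ≤ L * |t - a| := hlip t a htR ha
    have h2 : |t - a| ≤ g a / (2 * L) := by
      rw [abs_of_nonneg (by linarith [ht.1])]
      have h := ht.2; rw [hb] at h; linarith
    have h3 : L * |t - a| ≤ g a / 2 := by
      calc L * |t - a| ≤ L * (g a / (2 * L)) := mul_le_mul_of_nonneg_left h2 hL.le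
        _ = g a / 2 := by field_simp
    have h4 := abs_le.1 (h1.trans h3)
    exact ⟨by linarith [h4.1], by linarith [h4.2]⟩
  have hgc : ContinuousOn g (Icc a b) := by
    have hlw : LipschitzOnWith (Real.toNNReal L) g (Icc a b) := by
      rw [lipschitzOnWith_iff_dist_le_mul]
      intro x hx y hy
      rw [Real.dist_eq, Real.dist_eq, Real.coe_toNNReal _ hL.le]
      exact hlip x y (le_trans ha hx.1) (le_trans ha hy.1)
    exact hlw.continuousOn
  have hωopen : IsOpen ω := by
    have heq : ω = ((Ioo a b) ×ˢ (univ : Set ℝ)) ∩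
        ((fun x : ℝ × ℝ => g x.1 - |x.2|) ⁻¹' Ioi 0) := by
      ext x
      simp only [hω_def, outletSlice, mem_setOf_eq, mem_inter_iff, mem_prod, mem_Ioo, mem_univ,
        and_true, mem_preimage, mem_Ioi, sub_pos]
      tauto
    rw [heq]
    refine ContinuousOn.isOpen_inter_preimage ?_ (isOpen_Ioo.prod isOpen_univ) isOpen_Ioi
    apply ContinuousOn.sub
    · exact (hgc.mono Ioo_subset_Icc_self).comp continuous_fst.continuousOn (fun x hx => hx.1)
    · exact (continuous_abs.comp continuous_snd).continuousOn
  have hωmeas : MeasurableSet ω := hωopen.measurableSet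
  have hmemIff : ∀ x1 y : ℝ, (x1, y) ∈ ω ↔ (x1 ∈ Ioo a b ∧ y ∈ Ioo (-(g x1)) (g x1)) := by
    intro x1 y
    simp only [hω_def, outletSlice, mem_setOf_eq, mem_Ioo, abs_lt]
    tauto
  have hbox : ω ⊆ (Ioo a b) ×ˢ (Ioo (-(3 / 2 * g a)) (3 / 2 * g a)) := by
    rintro ⟨x1, y⟩ hx
    rcases (hmemIff x1 y).1 hx with ⟨h1, h2⟩
    have h3 := (hgb x1 ⟨h1.1.le, h1.2.le⟩).2
    exact ⟨h1, ⟨by linarith [h2.1], by linarith [h2.2]⟩⟩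
  have hScomp : IsCompact S := by
    apply Metric.isCompact_of_isClosed_isBounded isClosed_closure
    exact (((Metric.isBounded_Ioo a b).prod (Metric.isBounded_Ioo _ _)).subset hbox).closure
  rcases exists_fderiv_bound hωopen hScomp hu with ⟨M, hM0, hM⟩
  have hdiff : ∀ x ∈ ω, DifferentiableAt ℝ u x := fun x hx =>
    ((hu.differentiableOn one_ne_zero) x (subset_closure hx)).differentiableAt
      (Filter.mem_of_superset (hωopen.mem_nhds hx) subset_closure)
  have hfw : ∀ x ∈ ω, fderivWithin ℝ u S x = fderiv ℝ u x := fun x hx =>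
    fderivWithin_of_mem_nhds (Filter.mem_of_superset (hωopen.mem_nhds hx) subset_closure)
  have h01norm : ‖((0 : ℝ), (1 : ℝ))‖ = 1 := by
    rw [Prod.norm_def]; simp
  -- the slice inequality
  have hslice : ∀ x1 ∈ Ioo a b,
      ∫⁻ y in Ioo (-(g x1)) (g x1), ENNReal.ofReal (u (x1, y) ^ 2) ≤
        ENNReal.ofReal (9 * g a ^ 2) *
          ∫⁻ y in Ioo (-(g x1)) (g x1), ENNReal.ofReal (‖fderivWithin ℝ u S (x1, y)‖ ^ 2) := by
    intro x1 hx1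
    have hx1' : x1 ∈ Icc a b := ⟨hx1.1.le, hx1.2.le⟩
    have hgx1 : 0 < g x1 := lt_of_lt_of_le (by linarith) (hgb x1 hx1').1
    have hc12 : -(g x1) ≤ g x1 := by linarith
    have hmemω : ∀ y ∈ Ioo (-(g x1)) (g x1), (x1, y) ∈ ω := fun y hy =>
      (hmemIff x1 y).2 ⟨hx1, hy⟩
    have hsubS : ∀ y ∈ Icc (-(g x1)) (g x1), (x1, y) ∈ S := by
      intro y hy
      have h1 : Icc (-(g x1)) (g x1) = closure (Ioo (-(g x1)) (g x1)) :=
        (closure_Ioo (by linarith)).symm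
      have hcont : Continuous (fun y : ℝ => ((x1 : ℝ), y)) := Continuous.prodMk_right x1
      have h2 := image_closure_subset_closure_image (s := Ioo (-(g x1)) (g x1)) hcont
      have h3 : (fun y : ℝ => ((x1 : ℝ), y)) '' Ioo (-(g x1)) (g x1) ⊆ ω := by
        rintro _ ⟨y', hy', rfl⟩; exact hmemω y' hy'
      have h4 := h2 (mem_image_of_mem _ (h1 ▸ hy))
      exact closure_mono h3 h4
    set f : ℝ → ℝ := fun y => u (x1, y) with hf_def
    set f' : ℝ → ℝ :=
      (Ioo (-(g x1)) (g x1)).indicator (fun y => (fderiv ℝ u (x1, y)) ((0 : ℝ), (1 : ℝ)))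
      with hf'_def
    have hfc : ContinuousOn f (Icc (-(g x1)) (g x1)) :=
      hu.continuousOn.comp ((Continuous.prodMk_right x1).continuousOn) (fun y hy => hsubS y hy)
    have hfd : ∀ y ∈ Ioo (-(g x1)) (g x1), HasDerivAt f (f' y) y := by
      intro y hy
      have h1 : HasFDerivAt u (fderiv ℝ u (x1, y)) (x1, y) := (hdiff _ (hmemω y hy)).hasFDerivAt
      have h2 : HasDerivAt (fun y : ℝ => ((x1 : ℝ), y)) ((0 : ℝ), (1 : ℝ)) y :=
        HasDerivAt.prodMk (hasDerivAt_const y x1) (hasDerivAt_id y)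
      have h3 := h1.comp_hasDerivAt y h2
      have h4 : f' y = (fderiv ℝ u (x1, y)) ((0 : ℝ), (1 : ℝ)) := by
        rw [hf'_def, indicator_of_mem hy]
      rw [h4]
      exact h3
    have hf'b : ∀ y, |f' y| ≤ M := by
      intro y
      rw [hf'_def]
      by_cases hy : y ∈ Ioo (-(g x1)) (g x1)
      · rw [indicator_of_mem hy]
        calc |(fderiv ℝ u (x1, y)) ((0 : ℝ), (1 : ℝ))|
            ≤ ‖fderiv ℝ u (x1, y)‖ * ‖((0 : ℝ), (1 : ℝ))‖ := (fderiv ℝ u (x1, y)).le_opNorm _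
          _ = ‖fderiv ℝ u (x1, y)‖ := by rw [h01norm, mul_one]
          _ ≤ M := hM _ (hmemω y hy)
      · rw [indicator_of_notMem hy]; simpa using hM0
    have hf'm : Measurable f' := by
      rw [hf'_def]
      refine Measurable.indicator ?_ measurableSet_Ioo
      exact (measurable_fderiv_apply_const ℝ u ((0 : ℝ), (1 : ℝ))).comp
        (Continuous.prodMk_right x1).measurable
    have hzero : f (-(g x1)) = 0 := (hbc x1 hx1').2
    have hpoin := poincare_1d hc12 hfc hfd hf'm hf'b hzero
    have hf2int : IntegrableOn (fun y => f y ^ 2) (Ioo (-(g x1)) (g x1)) volume :=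
      ((hfc.pow 2).integrableOn_Icc).mono_set Ioo_subset_Icc_self
    have hf'2int : IntegrableOn (fun y => f' y ^ 2) (Ioo (-(g x1)) (g x1)) volume := by
      refine (integrableOn_const measure_Ioo_lt_top.ne :
        IntegrableOn (fun _ => M ^ 2) (Ioo (-(g x1)) (g x1)) volume).mono'
        ((hf'm.pow_const 2).aestronglyMeasurable) (ae_of_all _ fun y => ?_)
      rw [Real.norm_eq_abs, abs_of_nonneg (sq_nonneg _), ← sq_abs]
      exact pow_le_pow_left₀ (abs_nonneg _) (hf'b y) 2
    have e1 : ∫⁻ y in Ioo (-(g x1)) (g x1), ENNReal.ofReal (f y ^ 2) =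
        ENNReal.ofReal (∫ y in Ioo (-(g x1)) (g x1), f y ^ 2) :=
      (ofReal_integral_eq_lintegral_ofReal hf2int (ae_of_all _ fun y => sq_nonneg _)).symm
    have e2 : ∫⁻ y in Ioo (-(g x1)) (g x1), ENNReal.ofReal (f' y ^ 2) =
        ENNReal.ofReal (∫ y in Ioo (-(g x1)) (g x1), f' y ^ 2) :=
      (ofReal_integral_eq_lintegral_ofReal hf'2int (ae_of_all _ fun y => sq_nonneg _)).symm
    have hfact : (g x1 - -(g x1)) ^ 2 * ∫ y in Ioo (-(g x1)) (g x1), f' y ^ 2 ≤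
        9 * g a ^ 2 * ∫ y in Ioo (-(g x1)) (g x1), f' y ^ 2 := by
      have hint_nn : 0 ≤ ∫ y in Ioo (-(g x1)) (g x1), f' y ^ 2 :=
        integral_nonneg fun y => sq_nonneg _
      have h1 : g x1 ≤ 3 / 2 * g a := (hgb x1 hx1').2
      have h2 : (g x1 - -(g x1)) ^ 2 ≤ 9 * g a ^ 2 := by nlinarith [hgx1.le]
      exact mul_le_mul_of_nonneg_right h2 hint_nn
    calc ∫⁻ y in Ioo (-(g x1)) (g x1), ENNReal.ofReal (u (x1, y) ^ 2)
        = ENNReal.ofReal (∫ y in Ioo (-(g x1)) (g x1), f y ^ 2) := e1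
      _ ≤ ENNReal.ofReal (9 * g a ^ 2 * ∫ y in Ioo (-(g x1)) (g x1), f' y ^ 2) :=
          ENNReal.ofReal_le_ofReal (hpoin.trans hfact)
      _ = ENNReal.ofReal (9 * g a ^ 2) *
            ENNReal.ofReal (∫ y in Ioo (-(g x1)) (g x1), f' y ^ 2) :=
          ENNReal.ofReal_mul (by positivity)
      _ = ENNReal.ofReal (9 * g a ^ 2) *
            ∫⁻ y in Ioo (-(g x1)) (g x1), ENNReal.ofReal (f' y ^ 2) := by rw [e2]
      _ ≤ ENNReal.ofReal (9 * g a ^ 2) *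
            ∫⁻ y in Ioo (-(g x1)) (g x1), ENNReal.ofReal (‖fderivWithin ℝ u S (x1, y)‖ ^ 2) := by
          refine mul_le_mul_right ?_ _
          refine lintegral_mono_ae ((ae_restrict_iff'
            measurableSet_Ioo).2 (ae_of_all _ fun y hy => ?_))
          apply ENNReal.ofReal_le_ofReal
          have h4 : f' y = (fderiv ℝ u (x1, y)) ((0 : ℝ), (1 : ℝ)) := by
            rw [hf'_def, indicator_of_mem hy]
          rw [h4, hfw _ (hmemω y hy)]
          have h5 : |(fderiv ℝ u (x1, y)) ((0 : ℝ), (1 : ℝ))| ≤ ‖fderiv ℝ u (x1, y)‖ := by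
            calc |(fderiv ℝ u (x1, y)) ((0 : ℝ), (1 : ℝ))|
                ≤ ‖fderiv ℝ u (x1, y)‖ * ‖((0 : ℝ), (1 : ℝ))‖ := (fderiv ℝ u (x1, y)).le_opNorm _
              _ = ‖fderiv ℝ u (x1, y)‖ := by rw [h01norm, mul_one]
          calc ((fderiv ℝ u (x1, y)) ((0 : ℝ), (1 : ℝ))) ^ 2
              = |(fderiv ℝ u (x1, y)) ((0 : ℝ), (1 : ℝ))| ^ 2 := (sq_abs _).symm
            _ ≤ ‖fderiv ℝ u (x1, y)‖ ^ 2 := pow_le_pow_left₀ (abs_nonneg _) h5 2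
  -- global assembly
  have humeas : AEMeasurable u (volume.restrict ω) :=
    (hu.continuousOn.mono subset_closure).aemeasurable hωmeas
  have hGmeas : AEMeasurable (ω.indicator (fun x => ENNReal.ofReal (u x ^ 2))) volume :=
    (aemeasurable_indicator_iff hωmeas).2 ((humeas.pow_const 2).ennreal_ofReal)
  have hHmeas : AEMeasurable
      (ω.indicator (fun x => ENNReal.ofReal (‖fderivWithin ℝ u S x‖ ^ 2))) volume := by
    have h1 : ω.indicator (fun x => ENNReal.ofReal (‖fderivWithin ℝ u S x‖ ^ 2)) =
        ω.indicator (fun x => ENNReal.ofReal (‖fderiv ℝ u x‖ ^ 2)) :=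
      indicator_congr fun x hx => by rw [hfw x hx]
    rw [h1]
    exact (Measurable.indicator
      ((((measurable_fderiv ℝ u).norm).pow_const 2).ennreal_ofReal) hωmeas).aemeasurable
  have hTG := slice_lintegral (fun x => ENNReal.ofReal (u x ^ 2)) hωmeas hGmeas
  have hTH := slice_lintegral (fun x => ENNReal.ofReal (‖fderivWithin ℝ u S x‖ ^ 2)) hωmeas hHmeas
  have hmain : ∫⁻ x in ω, ENNReal.ofReal (u x ^ 2) ≤
      ENNReal.ofReal (9 * g a ^ 2) *
        ∫⁻ x in ω, ENNReal.ofReal (‖fderivWithin ℝ u S x‖ ^ 2) := by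
    rw [hTG, hTH, ← lintegral_const_mul' _ _ ENNReal.ofReal_ne_top]
    refine lintegral_mono fun x1 => ?_
    by_cases hx1 : x1 ∈ Ioo a b
    · rw [indicator_of_mem hx1, indicator_of_mem hx1]
      exact hslice x1 hx1
    · rw [indicator_of_notMem hx1, indicator_of_notMem hx1, mul_zero]
  have hωvol : volume ω < ⊤ := by
    refine lt_of_le_of_lt (measure_mono hbox) ?_
    rw [show (volume : Measure (ℝ × ℝ)) = (volume : Measure ℝ).prod volume from
      Measure.volume_eq_prod ℝ ℝ, Measure.prod_prod]
    exact ENNReal.mul_lt_top measure_Ioo_lt_top measure_Ioo_lt_top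
  have hHfin : (∫⁻ x in ω, ENNReal.ofReal (‖fderivWithin ℝ u S x‖ ^ 2)) ≠ ⊤ := by
    have hle : (∫⁻ x in ω, ENNReal.ofReal (‖fderivWithin ℝ u S x‖ ^ 2)) ≤
        ENNReal.ofReal (M ^ 2) * volume ω := by
      refine le_trans (lintegral_mono_ae ((ae_restrict_iff' hωmeas).2
        (ae_of_all _ fun x hx => ?_))) (le_of_eq (setLIntegral_const _ _))
      apply ENNReal.ofReal_le_ofReal
      rw [hfw x hx]
      exact pow_le_pow_left₀ (norm_nonneg _) (hM x hx) 2
    exact ne_of_lt (lt_of_le_of_lt hle (ENNReal.mul_lt_top ENNReal.ofReal_lt_top hωvol))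
  have eL : ∫ x in ω, u x ^ 2 = (∫⁻ x in ω, ENNReal.ofReal (u x ^ 2)).toReal :=
    integral_eq_lintegral_of_nonneg_ae (ae_of_all _ fun x => sq_nonneg _)
      ((humeas.pow_const 2).aestronglyMeasurable)
  have hFmeas : AEStronglyMeasurable (fun x => ‖fderivWithin ℝ u S x‖ ^ 2)
      (volume.restrict ω) := by
    refine ((((measurable_fderiv ℝ u).norm).pow_const 2).aestronglyMeasurable).congr ?_
    refine (ae_restrict_iff' hωmeas).2 (ae_of_all _ fun x hx => ?_)
    show ‖fderiv ℝ u x‖ ^ 2 = ‖fderivWithin ℝ u S x‖ ^ 2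
    rw [hfw x hx]
  have eR : ∫ x in ω, ‖fderivWithin ℝ u S x‖ ^ 2 =
      (∫⁻ x in ω, ENNReal.ofReal (‖fderivWithin ℝ u S x‖ ^ 2)).toReal :=
    integral_eq_lintegral_of_nonneg_ae (ae_of_all _ fun x => sq_nonneg _) hFmeas
  rw [eL, eR]
  calc (∫⁻ x in ω, ENNReal.ofReal (u x ^ 2)).toReal
      ≤ (ENNReal.ofReal (9 * g a ^ 2) *
          ∫⁻ x in ω, ENNReal.ofReal (‖fderivWithin ℝ u S x‖ ^ 2)).toReal :=
        ENNReal.toReal_mono (ENNReal.mul_ne_top ENNReal.ofReal_ne_top hHfin) hmain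
    _ = 9 * g a ^ 2 * (∫⁻ x in ω, ENNReal.ofReal (‖fderivWithin ℝ u S x‖ ^ 2)).toReal := by
        rw [ENNReal.toReal_mul, ENNReal.toReal_ofReal (by positivity)]
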